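/- For ξ ∈ ℝ⁹ written as ξ = (ξ^φ, ξ^v, ξ^r), define ξ^∧ ∈ se₂(3) as the 5×5 matrix [[ξ^φ×, ξ^v, ξ^r],[0,0,0],[0,0,0]]. Then the matrix exponential of ξ^∧ is [[exp(ξ^φ×), J(ξ^φ)ξ^v, J(ξ^φ)ξ^r],[0,1,0],[0,0,1]], where J(φ) = Σ_{n≥0} (φ^×)ⁿ/(n+1)! is the left Jacobian of SO(3); in particular exp(ξ^∧) ∈ SE₂(3). -/

import Mathlib

open Matrix

/-- The cross operator mapping `u ∈ ℝ³` to its skew-symmetric matrix. -/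
def skew (u : Fin 3 → ℝ) : Matrix (Fin 3) (Fin 3) ℝ :=
  !![0, -u 2, u 1; u 2, 0, -u 0; -u 1, u 0, 0]

/-- Membership in SO(3): orthogonal with determinant 1. -/
def IsSO3 (C : Matrix (Fin 3) (Fin 3) ℝ) : Prop :=
  Cᵀ * C = 1 ∧ C.det = 1

/-- The 5×5 extended-pose matrix `[[C, v, r],[0,1,0],[0,0,1]]`. -/
def se23mk (C : Matrix (Fin 3) (Fin 3) ℝ) (v r : Fin 3 → ℝ) :
    Matrix (Fin 5) (Fin 5) ℝ :=
  Matrix.of fun i j =>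
    if hi : (i : ℕ) < 3 then
      if hj : (j : ℕ) < 3 then C ⟨i, hi⟩ ⟨j, hj⟩
      else if (j : ℕ) = 3 then v ⟨i, hi⟩ else r ⟨i, hi⟩
    else if i = j then 1 else 0

/-- The set `SE₂(3)` of extended poses. -/
def SE23 : Set (Matrix (Fin 5) (Fin 5) ℝ) :=
  {X | ∃ C v r, IsSO3 C ∧ X = se23mk C v r}

/-- The `se₂(3)` wedge of `(ξ^φ, ξ^v, ξ^r)`: the 5×5 matrix
`[[ξ^φ×, ξ^v, ξ^r],[0,0,0],[0,0,0]]`. -/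
def se23wedge (ξφ ξv ξr : Fin 3 → ℝ) : Matrix (Fin 5) (Fin 5) ℝ :=
  Matrix.of fun i j =>
    if hi : (i : ℕ) < 3 then
      if hj : (j : ℕ) < 3 then skew ξφ ⟨i, hi⟩ ⟨j, hj⟩
      else if (j : ℕ) = 3 then ξv ⟨i, hi⟩ else ξr ⟨i, hi⟩
    else 0

/-- The left Jacobian of SO(3), `J(φ) = Σ_{n≥0} (φ^×)ⁿ/(n+1)!`. -/
noncomputable def leftJac (φ : Fin 3 → ℝ) : Matrix (Fin 3) (Fin 3) ℝ :=
  ∑' n : ℕ, ((n + 1).factorial : ℝ)⁻¹ • (skew φ) ^ n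

open NormedSpace

lemma skew_transpose (u : Fin 3 → ℝ) : (skew u)ᵀ = -skew u := by
  ext i j; fin_cases i <;> fin_cases j <;> simp [skew]

lemma expskew_orth (u : Fin 3 → ℝ) :
    (exp (skew u))ᵀ * exp (skew u) = 1 := by
  rw [← Matrix.exp_transpose, skew_transpose,
    ← Matrix.exp_add_of_commute _ _ ((Commute.refl (skew u)).neg_left), neg_add_cancel, exp_zero]

lemma expskew_det (u : Fin 3 → ℝ) : (exp (skew u)).det = 1 := by
  have horth := expskew_orth u
  have hdet2 : (exp (skew u)).det * (exp (skew u)).det = 1 := by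
    have := congrArg Matrix.det horth
    rwa [Matrix.det_mul, Matrix.det_transpose, Matrix.det_one] at this
  have hsq : exp (skew u) =
      exp ((2⁻¹ : ℝ) • skew u) * exp ((2⁻¹ : ℝ) • skew u) := by
    rw [← Matrix.exp_add_of_commute _ _ (Commute.refl ((2⁻¹:ℝ) • skew u)), ← add_smul]
    norm_num
  have hnn : 0 ≤ (exp (skew u)).det := by
    rw [hsq, Matrix.det_mul]
    exact mul_self_nonneg _
  rcases mul_self_eq_one_iff.mp hdet2 with h | h
  · exact h
  · exfalso; rw [h] at hnn; linarith

def blk (C : Matrix (Fin 3) (Fin 3) ℝ) (v r : Fin 3 → ℝ) (d : ℝ) : Matrix (Fin 5) (Fin 5) ℝ :=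
  Matrix.of fun i j =>
    if hi : (i : ℕ) < 3 then
      if hj : (j : ℕ) < 3 then C ⟨i, hi⟩ ⟨j, hj⟩
      else if (j : ℕ) = 3 then v ⟨i, hi⟩ else r ⟨i, hi⟩
    else if i = j then d else 0

lemma wedge_eq_blk (ξφ ξv ξr : Fin 3 → ℝ) :
    se23wedge ξφ ξv ξr = blk (skew ξφ) ξv ξr 0 := by
  ext i j
  simp only [se23wedge, blk, of_apply]
  split_ifs <;> rfl

lemma blk_apply_bot0 (C : Matrix (Fin 3) (Fin 3) ℝ) (v r : Fin 3 → ℝ) {i : Fin 5}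
    (hi : ¬ ((i : ℕ) < 3)) (j : Fin 5) : blk C v r 0 i j = 0 := by
  simp only [blk, of_apply, dif_neg hi]; split_ifs <;> rfl

lemma blk_mul (C C' : Matrix (Fin 3) (Fin 3) ℝ) (v r v' r' : Fin 3 → ℝ) :
    blk C v r 0 * blk C' v' r' 0 = blk (C * C') (C *ᵥ v') (C *ᵥ r') 0 := by
  ext i j
  by_cases hi : (i : ℕ) < 3
  · rw [mul_apply, Fin.sum_univ_five]
    have e0 : ((0:Fin 5):ℕ) = 0 := rfl
    have e1 : ((1:Fin 5):ℕ) = 1 := rfl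
    have e2 : ((2:Fin 5):ℕ) = 2 := rfl
    have e3 : ((3:Fin 5):ℕ) = 3 := rfl
    have e4 : ((4:Fin 5):ℕ) = 4 := rfl
    by_cases hj : (j : ℕ) < 3
    · simp [blk, hi, hj, e0, e1, e2, e3, e4, mul_apply, Fin.sum_univ_three]
    · by_cases hj3 : (j : ℕ) = 3 <;>
        simp [blk, hi, hj, hj3, e0, e1, e2, e3, e4, mulVec, dotProduct, Fin.sum_univ_three]
  · rw [blk_apply_bot0 _ _ _ hi, mul_apply]
    exact Finset.sum_eq_zero fun k _ => by rw [blk_apply_bot0 _ _ _ hi, zero_mul]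

lemma wedge_pow_succ (ξφ ξv ξr : Fin 3 → ℝ) (n : ℕ) :
    se23wedge ξφ ξv ξr ^ (n + 1) =
      blk (skew ξφ ^ (n + 1)) (skew ξφ ^ n *ᵥ ξv) (skew ξφ ^ n *ᵥ ξr) 0 := by
  induction n with
  | zero => simp [wedge_eq_blk]
  | succ n ih =>
    rw [pow_succ, ih, wedge_eq_blk, blk_mul, ← pow_succ]

noncomputable def blkC : Matrix (Fin 3) (Fin 3) ℝ →L[ℝ] Matrix (Fin 5) (Fin 5) ℝ :=
  LinearMap.toContinuousLinearMap
    { toFun := fun C => blk C 0 0 0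
      map_add' := by
        intro C C'; ext i j; simp only [blk, of_apply, Matrix.add_apply]
        split_ifs <;> simp [Matrix.add_apply]
      map_smul' := by
        intro c C; ext i j; simp only [blk, of_apply, Matrix.smul_apply, RingHom.id_apply]
        split_ifs <;> simp [Matrix.smul_apply] }

noncomputable def blkV : (Fin 3 → ℝ) →L[ℝ] Matrix (Fin 5) (Fin 5) ℝ :=
  LinearMap.toContinuousLinearMap
    { toFun := fun v => blk 0 v 0 0
      map_add' := by
        intro v v'; ext i j; simp only [blk, of_apply, Matrix.add_apply]
        split_ifs <;> simp
      map_smul' := by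
        intro c v; ext i j; simp only [blk, of_apply, Matrix.smul_apply, RingHom.id_apply]
        split_ifs <;> simp }

noncomputable def blkR : (Fin 3 → ℝ) →L[ℝ] Matrix (Fin 5) (Fin 5) ℝ :=
  LinearMap.toContinuousLinearMap
    { toFun := fun r => blk 0 0 r 0
      map_add' := by
        intro v v'; ext i j; simp only [blk, of_apply, Matrix.add_apply]
        split_ifs <;> simp
      map_smul' := by
        intro c v; ext i j; simp only [blk, of_apply, Matrix.smul_apply, RingHom.id_apply]
        split_ifs <;> simp }

lemma blk_decomp (C : Matrix (Fin 3) (Fin 3) ℝ) (v r : Fin 3 → ℝ) :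
    blk C v r 0 = blkC C + blkV v + blkR r := by
  show _ = blk C 0 0 0 + blk 0 v 0 0 + blk 0 0 r 0
  ext i j
  simp only [blk, Matrix.add_apply, of_apply]
  split_ifs <;> simp

noncomputable def mulVecCLM (v : Fin 3 → ℝ) : Matrix (Fin 3) (Fin 3) ℝ →L[ℝ] (Fin 3 → ℝ) :=
  LinearMap.toContinuousLinearMap
    { toFun := fun M => M *ᵥ v
      map_add' := fun M N => Matrix.add_mulVec M N v
      map_smul' := fun c M => Matrix.smul_mulVec c M v }

lemma one_blk : (1 : Matrix (Fin 5) (Fin 5) ℝ) = blk 1 0 0 1 := by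
  ext i j
  simp only [blk, of_apply, Matrix.one_apply]
  split_ifs with h1 h2 h3 <;> simp_all [Fin.ext_iff] <;> omega

lemma blk_add (C C' : Matrix (Fin 3) (Fin 3) ℝ) (v r v' r' : Fin 3 → ℝ) (d d' : ℝ) :
    blk C v r d + blk C' v' r' d' = blk (C + C') (v + v') (r + r') (d + d') := by
  ext i j
  simp only [blk, of_apply, Matrix.add_apply]
  split_ifs <;> simp [Matrix.add_apply]

lemma blk_smul (c : ℝ) (C : Matrix (Fin 3) (Fin 3) ℝ) (v r : Fin 3 → ℝ) (d : ℝ) :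
    c • blk C v r d = blk (c • C) (c • v) (c • r) (c * d) := by
  ext i j
  simp only [blk, of_apply, Matrix.smul_apply]
  split_ifs <;> simp [Matrix.smul_apply, smul_eq_mul]

set_option maxHeartbeats 1000000 in
lemma exp_wedge (ξφ ξv ξr : Fin 3 → ℝ) :
    exp (se23wedge ξφ ξv ξr) =
      blk (exp (skew ξφ)) (leftJac ξφ *ᵥ ξv) (leftJac ξφ *ᵥ ξr) 1 := by
  letI : SeminormedRing (Matrix (Fin 5) (Fin 5) ℝ) := Matrix.linftyOpSemiNormedRing
  letI : NormedRing (Matrix (Fin 5) (Fin 5) ℝ) := Matrix.linftyOpNormedRing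
  letI : NormedAlgebra ℝ (Matrix (Fin 5) (Fin 5) ℝ) := Matrix.linftyOpNormedAlgebra
  letI : SeminormedRing (Matrix (Fin 3) (Fin 3) ℝ) := Matrix.linftyOpSemiNormedRing
  letI : NormedRing (Matrix (Fin 3) (Fin 3) ℝ) := Matrix.linftyOpNormedRing
  letI : NormedAlgebra ℝ (Matrix (Fin 3) (Fin 3) ℝ) := Matrix.linftyOpNormedAlgebra
  set W := se23wedge ξφ ξv ξr with hW
  set S := skew ξφ with hS
  -- summability facts
  have hsum5 : Summable fun n : ℕ => ((n.factorial : ℝ))⁻¹ • W ^ n := expSeries_summable' (𝕂 := ℝ) W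
  have hsumS : Summable fun n : ℕ => ((n.factorial : ℝ))⁻¹ • S ^ n := expSeries_summable' (𝕂 := ℝ) S
  have hsumC : Summable fun n : ℕ => ((n + 1).factorial : ℝ)⁻¹ • S ^ (n + 1) :=
    (summable_nat_add_iff 1).mpr hsumS
  have hsumJ : Summable fun n : ℕ => ((n + 1).factorial : ℝ)⁻¹ • S ^ n := by
    refine Summable.of_norm_bounded (norm_expSeries_summable' (𝕂 := ℝ) S) fun n => ?_
    rw [norm_smul, norm_smul]
    gcongr
    rw [Real.norm_eq_abs, Real.norm_eq_abs, abs_of_nonneg (by positivity),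
      abs_of_nonneg (by positivity)]
    apply inv_anti₀
    · positivity
    · exact_mod_cast Nat.factorial_le (Nat.le_succ n)
  have hvaux : ∀ (ξ : Fin 3 → ℝ) (n : ℕ),
      ((n + 1).factorial : ℝ)⁻¹ • (S ^ n *ᵥ ξ) = mulVecCLM ξ (((n + 1).factorial : ℝ)⁻¹ • S ^ n) := by
    intro ξ n
    simp only [mulVecCLM, LinearMap.coe_toContinuousLinearMap', LinearMap.coe_mk,
      AddHom.coe_mk, Matrix.smul_mulVec]
  have hJv : ∀ ξ : Fin 3 → ℝ,
      ∑' n : ℕ, ((n + 1).factorial : ℝ)⁻¹ • (S ^ n *ᵥ ξ) = leftJac ξφ *ᵥ ξ := by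
    intro ξ
    rw [tsum_congr (fun n => hvaux ξ n), ← ContinuousLinearMap.map_tsum _ hsumJ]
    rfl
  have hsumv : ∀ ξ : Fin 3 → ℝ, Summable fun n : ℕ => ((n + 1).factorial : ℝ)⁻¹ • (S ^ n *ᵥ ξ) := by
    intro ξ
    refine Summable.congr ((mulVecCLM ξ).summable hsumJ) fun n => (hvaux ξ n).symm
  have hCsum : ∑' n : ℕ, ((n + 1).factorial : ℝ)⁻¹ • S ^ (n + 1) = exp S - 1 := by
    have this : exp S = ∑' n : ℕ, ((n.factorial : ℝ))⁻¹ • S ^ n := by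
      rw [exp_eq_tsum (𝕂 := ℝ)]
    rw [Summable.tsum_eq_zero_add hsumS] at this
    simp only [pow_zero, Nat.factorial_zero, Nat.cast_one, inv_one, one_smul] at this
    rw [eq_sub_iff_add_eq, this]; exact add_comm _ _
  -- the main chain
  have hexpW : exp W = ∑' n : ℕ, ((n.factorial : ℝ))⁻¹ • W ^ n := by
    rw [exp_eq_tsum (𝕂 := ℝ)]
  rw [hexpW, Summable.tsum_eq_zero_add hsum5]
  simp only [pow_zero, Nat.factorial_zero, Nat.cast_one, inv_one, one_smul]
  have hterm : ∀ n : ℕ, ((n + 1).factorial : ℝ)⁻¹ • W ^ (n + 1) =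
      blkC (((n + 1).factorial : ℝ)⁻¹ • S ^ (n + 1)) +
      blkV (((n + 1).factorial : ℝ)⁻¹ • (S ^ n *ᵥ ξv)) +
      blkR (((n + 1).factorial : ℝ)⁻¹ • (S ^ n *ᵥ ξr)) := by
    intro n
    rw [hW, wedge_pow_succ, blk_smul, ← hS, mul_zero, blk_decomp]
  rw [tsum_congr hterm]
  rw [Summable.tsum_add ((hsumC.mapL blkC).add ((hsumv ξv).mapL blkV)) ((hsumv ξr).mapL blkR),
    Summable.tsum_add (hsumC.mapL blkC) ((hsumv ξv).mapL blkV),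
    ← ContinuousLinearMap.map_tsum _ hsumC, ← ContinuousLinearMap.map_tsum _ (hsumv ξv),
    ← ContinuousLinearMap.map_tsum _ (hsumv ξr),
    hCsum, hJv ξv, hJv ξr, ← blk_decomp, one_blk, blk_add]
  norm_num

lemma se23mk_eq_blk (C : Matrix (Fin 3) (Fin 3) ℝ) (v r : Fin 3 → ℝ) :
    se23mk C v r = blk C v r 1 := rfl

theorem exp_se23wedge (ξφ ξv ξr : Fin 3 → ℝ) :
    NormedSpace.exp (se23wedge ξφ ξv ξr) =
      se23mk (NormedSpace.exp (skew ξφ)) (leftJac ξφ *ᵥ ξv) (leftJac ξφ *ᵥ ξr) ∧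
    NormedSpace.exp (se23wedge ξφ ξv ξr) ∈ SE23 := by
  have h1 : NormedSpace.exp (se23wedge ξφ ξv ξr) =
      se23mk (NormedSpace.exp (skew ξφ)) (leftJac ξφ *ᵥ ξv) (leftJac ξφ *ᵥ ξr) := by
    rw [se23mk_eq_blk]
    exact exp_wedge ξφ ξv ξr
  refine ⟨h1, ?_⟩
  exact ⟨_, _, _, ⟨expskew_orth ξφ, expskew_det ξφ⟩, h1⟩
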